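/- Let l ∈ ℕ, and for each i ∈ [l] let c_i ∈ ℝ^m, let V_i ∈ ℝ^{m×m} be orthogonal and Λ_i diagonal with positive diagonal entries μ_{i,k} forming the translated and rotated p-ellipse E_p(c_i, μ_i, V_i) = {x ∈ ℝ^m : Σ_{k=1}^m |⟨(V_i)_k, x − c_i⟩|^p / μ_{i,k}^p ≤ 1}. Then the Rademacher complexity of the union satisfies R(⋃_{i=1}^l E_p(c_i, μ_i, V_i)) ≤ (1/m) max_{i∈[l]} ‖V_i Λ_i‖_{p→1} + max_{i∈[l]} ‖c_i‖_2 · √(2 ln l) / m. -/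

import Mathlib

open Finset Matrix

noncomputable def sgn (b : Bool) : ℝ := if b then 1 else -1

/-- Rademacher complexity of a set of vectors `A ⊆ ℝ^m`. -/
noncomputable def radComp (m : ℕ) (A : Set (Fin m → ℝ)) : ℝ :=
  (1 / m) * ((1 / 2 ^ m) *
    ∑ ε : Fin m → Bool, sSup ((fun a => ∑ k, sgn (ε k) * a k) '' A))

/-- The p-to-1 operator norm `‖M‖_{p→1} = sup_{‖u‖_p ≤ 1} ‖Mu‖_1`. -/
noncomputable def pToOneNorm (m : ℕ) (p : ℝ) (M : Matrix (Fin m) (Fin m) ℝ) : ℝ :=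
  sSup {y : ℝ | ∃ u : Fin m → ℝ, (∑ k, |u k| ^ p) ≤ 1 ∧ y = ∑ k, |M.mulVec u k|}

lemma sgn_mul_le (b : Bool) (a : ℝ) : sgn b * a ≤ |a| := by
  cases b <;> simp [sgn] <;> [exact neg_le_abs a; exact le_abs_self a]

lemma abs_le_one_of_rpow {p u : ℝ} (hp : 1 ≤ p) (h : |u| ^ p ≤ 1) : |u| ≤ 1 := by
  by_contra hgt
  push_neg at hgt
  have : (1:ℝ) < |u| ^ p := by
    rw [Real.one_lt_rpow_iff_of_pos (lt_trans one_pos hgt)]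
    exact Or.inl ⟨hgt, lt_of_lt_of_le one_pos hp⟩
  linarith

lemma pToOne_bdd (m : ℕ) (p : ℝ) (hp : 1 ≤ p) (M : Matrix (Fin m) (Fin m) ℝ) :
    BddAbove {y : ℝ | ∃ u : Fin m → ℝ, (∑ k, |u k| ^ p) ≤ 1 ∧ y = ∑ k, |M.mulVec u k|} := by
  refine ⟨∑ k, ∑ j, |M k j|, ?_⟩
  rintro y ⟨u, hu, rfl⟩
  have hu1 : ∀ j, |u j| ≤ 1 := by
    intro j
    refine abs_le_one_of_rpow hp (le_trans ?_ hu)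
    exact Finset.single_le_sum (fun k _ => Real.rpow_nonneg (abs_nonneg _) p) (mem_univ j)
  refine Finset.sum_le_sum fun k _ => ?_
  calc |M.mulVec u k| ≤ ∑ j, |M k j * u j| := by
        simpa [Matrix.mulVec, dotProduct] using Finset.abs_sum_le_sum_abs (fun j => M k j * u j) univ
    _ ≤ ∑ j, |M k j| := by
        refine Finset.sum_le_sum fun j _ => ?_
        rw [abs_mul]
        exact mul_le_of_le_one_right (abs_nonneg _) (hu1 j)

lemma le_pToOne {m : ℕ} {p : ℝ} (hp : 1 ≤ p) (M : Matrix (Fin m) (Fin m) ℝ)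
    (u : Fin m → ℝ) (hu : (∑ k, |u k| ^ p) ≤ 1) :
    ∑ k, |M.mulVec u k| ≤ pToOneNorm m p M :=
  le_csSup (pToOne_bdd m p hp M) ⟨u, hu, rfl⟩

lemma ellipse_param {m : ℕ} (p : ℝ)
    (c x : Fin m → ℝ) (V : Matrix (Fin m) (Fin m) ℝ)
    (hV2 : V * Vᵀ = 1) (μ : Fin m → ℝ) (hμ : ∀ k, 0 < μ k)
    (hx : ∑ k, |∑ j, V j k * (x j - c j)| ^ p / (μ k) ^ p ≤ 1) :
    ∃ u : Fin m → ℝ, (∑ k, |u k| ^ p) ≤ 1 ∧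
      ∀ k', (V * Matrix.diagonal μ).mulVec u k' = x k' - c k' := by
  refine ⟨fun k => (∑ j, V j k * (x j - c j)) / μ k, ?_, ?_⟩
  · refine le_trans (le_of_eq (Finset.sum_congr rfl fun k _ => ?_)) hx
    rw [abs_div, Real.div_rpow (abs_nonneg _) (abs_nonneg _), abs_of_pos (hμ k)]
  · intro k'
    have h1 : ∀ k, (V * Matrix.diagonal μ) k' k = V k' k * μ k := fun k =>
      Matrix.mul_diagonal ..
    simp only [Matrix.mulVec, dotProduct, h1]
    have h2 : ∀ k, V k' k * μ k * ((∑ j, V j k * (x j - c j)) / μ k)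
        = ∑ j, V k' k * (V j k * (x j - c j)) := by
      intro k
      rw [mul_assoc, mul_div_cancel₀ _ (hμ k).ne', Finset.mul_sum]
    calc ∑ k, V k' k * μ k * ((∑ j, V j k * (x j - c j)) / μ k)
        = ∑ k, ∑ j, V k' k * (V j k * (x j - c j)) := Finset.sum_congr rfl fun k _ => h2 k
      _ = ∑ j, (∑ k, V k' k * V j k) * (x j - c j) := by
          rw [Finset.sum_comm]
          refine Finset.sum_congr rfl fun j _ => ?_
          rw [Finset.sum_mul]
          exact Finset.sum_congr rfl fun k _ => by ring
      _ = ∑ j, (V * Vᵀ) k' j * (x j - c j) := by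
          exact Finset.sum_congr rfl fun j _ => by rw [Matrix.mul_apply]; rfl
      _ = x k' - c k' := by
          rw [hV2]
          simp [Matrix.one_apply]

lemma mgf_bound (m : ℕ) (t : ℝ) (c : Fin m → ℝ) :
    ∑ ε : Fin m → Bool, Real.exp (t * ∑ k, sgn (ε k) * c k)
      ≤ 2 ^ m * Real.exp (t ^ 2 * (∑ k, c k ^ 2) / 2) := by
  have h1 : ∀ ε : Fin m → Bool, Real.exp (t * ∑ k, sgn (ε k) * c k)
      = ∏ k, Real.exp (t * (sgn (ε k) * c k)) := by
    intro ε
    rw [← Real.exp_sum, Finset.mul_sum]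
  calc ∑ ε : Fin m → Bool, Real.exp (t * ∑ k, sgn (ε k) * c k)
      = ∑ ε : Fin m → Bool, ∏ k, Real.exp (t * (sgn (ε k) * c k)) :=
        Finset.sum_congr rfl fun ε _ => h1 ε
    _ = ∏ k, ∑ b : Bool, Real.exp (t * (sgn b * c k)) := by
        rw [← Finset.sum_prod_piFinset univ (fun k b => Real.exp (t * (sgn b * c k)))]
        rw [Fintype.piFinset_univ]
    _ = ∏ k, 2 * Real.cosh (t * c k) := by
        refine Finset.prod_congr rfl fun k _ => ?_
        rw [Fintype.sum_bool, Real.cosh_eq]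
        simp only [sgn]
        norm_num
        ring_nf
    _ ≤ ∏ k, 2 * Real.exp ((t * c k) ^ 2 / 2) := by
        refine Finset.prod_le_prod (fun k _ => by positivity) fun k _ => ?_
        have := Real.cosh_le_exp_half_sq (t * c k)
        linarith
    _ = 2 ^ m * Real.exp (t ^ 2 * (∑ k, c k ^ 2) / 2) := by
        rw [Finset.prod_mul_distrib, Finset.prod_const, ← Real.exp_sum]
        simp only [card_univ, Fintype.card_fin]
        congr 1
        rw [Finset.mul_sum, ← Finset.sum_div]
        have : ∀ k : Fin m, (t * c k) ^ 2 = t ^ 2 * c k ^ 2 := fun k => by ring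
        rw [Finset.sum_congr rfl fun k _ => this k]

lemma massart_core (m l : ℕ) (hl : 0 < l)
    (hne : (univ : Finset (Fin l)).Nonempty)
    (c : Fin l → Fin m → ℝ) (B : ℝ)
    (hB : ∀ i, (∑ j, c i j ^ 2) ≤ B ^ 2) (t : ℝ) (ht : 0 < t) :
    (1 / 2 ^ m) * ∑ ε : Fin m → Bool, univ.sup' hne (fun i => ∑ k, sgn (ε k) * c i k)
      ≤ Real.log l / t + t * B ^ 2 / 2 := by
  set G : (Fin m → Bool) → ℝ := fun ε => univ.sup' hne (fun i => ∑ k, sgn (ε k) * c i k)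
  set A : ℝ := (1 / 2 ^ m : ℝ) * ∑ ε : Fin m → Bool, G ε with hA
  have hw : ∑ _ε : Fin m → Bool, (1 / 2 ^ m : ℝ) = 1 := by
    rw [Finset.sum_const, card_univ]
    simp [Fintype.card_fun]
  have jensen : Real.exp (t * A) ≤ ∑ ε : Fin m → Bool, (1 / 2 ^ m : ℝ) * Real.exp (t * G ε) := by
    have := convexOn_exp.map_sum_le (t := (univ : Finset (Fin m → Bool)))
      (w := fun _ => (1 / 2 ^ m : ℝ)) (p := fun ε => t * G ε)
      (fun _ _ => by positivity) hw (fun _ _ => Set.mem_univ _)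
    simp only [smul_eq_mul] at this
    have harg : ∑ ε : Fin m → Bool, (1 / 2 ^ m : ℝ) * (t * G ε) = t * A := by
      rw [hA, Finset.mul_sum, Finset.mul_sum]
      exact Finset.sum_congr rfl fun ε _ => by ring
    rwa [harg] at this
  have step2 : ∀ ε, Real.exp (t * G ε) ≤ ∑ i, Real.exp (t * ∑ k, sgn (ε k) * c i k) := by
    intro ε
    obtain ⟨i0, _, hi0⟩ := Finset.exists_mem_eq_sup' hne (fun i => ∑ k, sgn (ε k) * c i k)
    have hG : G ε = ∑ k, sgn (ε k) * c i0 k := hi0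
    rw [hG]
    exact Finset.single_le_sum (f := fun i => Real.exp (t * ∑ k, sgn (ε k) * c i k))
      (fun i _ => (Real.exp_pos _).le) (mem_univ i0)
  have step3 : Real.exp (t * A) ≤ l * Real.exp (t ^ 2 * B ^ 2 / 2) := by
    calc Real.exp (t * A) ≤ ∑ ε : Fin m → Bool, (1 / 2 ^ m : ℝ) * Real.exp (t * G ε) := jensen
      _ ≤ ∑ ε : Fin m → Bool, (1 / 2 ^ m : ℝ) * ∑ i, Real.exp (t * ∑ k, sgn (ε k) * c i k) :=
        Finset.sum_le_sum fun ε _ => mul_le_mul_of_nonneg_left (step2 ε) (by positivity)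
      _ = ∑ i, (1 / 2 ^ m : ℝ) * ∑ ε : Fin m → Bool, Real.exp (t * ∑ k, sgn (ε k) * c i k) := by
          rw [← Finset.mul_sum, ← Finset.mul_sum, Finset.sum_comm]
      _ ≤ ∑ i : Fin l, Real.exp (t ^ 2 * B ^ 2 / 2) := by
          refine Finset.sum_le_sum fun i _ => ?_
          have h1 := mgf_bound m t (c i)
          have h2 : Real.exp (t ^ 2 * (∑ k, c i k ^ 2) / 2) ≤ Real.exp (t ^ 2 * B ^ 2 / 2) := by
            apply Real.exp_le_exp.2
            have := hB i
            nlinarith [sq_nonneg t]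
          calc (1 / 2 ^ m : ℝ) * ∑ ε : Fin m → Bool, Real.exp (t * ∑ k, sgn (ε k) * c i k)
              ≤ (1 / 2 ^ m : ℝ) * (2 ^ m * Real.exp (t ^ 2 * (∑ k, c i k ^ 2) / 2)) :=
                mul_le_mul_of_nonneg_left h1 (by positivity)
            _ = Real.exp (t ^ 2 * (∑ k, c i k ^ 2) / 2) := by
                field_simp
            _ ≤ Real.exp (t ^ 2 * B ^ 2 / 2) := h2
      _ = l * Real.exp (t ^ 2 * B ^ 2 / 2) := by
          rw [Finset.sum_const, card_univ, Fintype.card_fin, nsmul_eq_mul]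
  have hlog : t * A ≤ Real.log l + t ^ 2 * B ^ 2 / 2 := by
    have h0 : (0:ℝ) < l := by exact_mod_cast hl
    have := Real.log_le_log (Real.exp_pos _) step3
    rwa [Real.log_exp, Real.log_mul h0.ne' (Real.exp_pos _).ne', Real.log_exp] at this
  calc A = (t * A) / t := by field_simp
    _ ≤ (Real.log l + t ^ 2 * B ^ 2 / 2) / t := div_le_div_of_nonneg_right hlog ht.le
    _ = Real.log l / t + t * B ^ 2 / 2 := by field_simp

lemma massart (m l : ℕ) (hl : 0 < l)
    (hne : (univ : Finset (Fin l)).Nonempty)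
    (c : Fin l → Fin m → ℝ) :
    (1 / 2 ^ m) * ∑ ε : Fin m → Bool, univ.sup' hne (fun i => ∑ k, sgn (ε k) * c i k)
      ≤ (univ.sup' hne (fun i => Real.sqrt (∑ j, (c i j) ^ 2))) * Real.sqrt (2 * Real.log l) := by
  set B : ℝ := univ.sup' hne (fun i => Real.sqrt (∑ j, (c i j) ^ 2)) with hBdef
  have hB0 : 0 ≤ B := by
    obtain ⟨i0, hi0⟩ := hne
    exact le_trans (Real.sqrt_nonneg _) (Finset.le_sup' (fun i => Real.sqrt (∑ j, (c i j) ^ 2)) hi0)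
  have hB : ∀ i, (∑ j, c i j ^ 2) ≤ B ^ 2 := by
    intro i
    have h1 : Real.sqrt (∑ j, c i j ^ 2) ≤ B :=
      Finset.le_sup' (fun i => Real.sqrt (∑ j, (c i j) ^ 2)) (mem_univ i)
    have h2 : (∑ j, c i j ^ 2) = Real.sqrt (∑ j, c i j ^ 2) ^ 2 :=
      (Real.sq_sqrt (Finset.sum_nonneg fun j _ => sq_nonneg _)).symm
    rw [h2]
    exact pow_le_pow_left₀ (Real.sqrt_nonneg _) h1 2
  have hlog0 : 0 ≤ Real.log l := Real.log_natCast_nonneg l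
  rcases eq_or_lt_of_le hB0 with hBz | hBpos
  · have hc : ∀ i k, c i k = 0 := by
      intro i k
      have h1 := hB i
      rw [← hBz] at h1
      have h2 : ∀ j ∈ univ, (0:ℝ) ≤ c i j ^ 2 := fun j _ => sq_nonneg _
      have h3 : c i k ^ 2 ≤ 0 := by
        have := Finset.single_le_sum h2 (mem_univ k)
        exact le_trans this (by simpa using h1)
      nlinarith [sq_nonneg (c i k)]
    have hG : ∀ ε : Fin m → Bool, univ.sup' hne (fun i => ∑ k, sgn (ε k) * c i k) = 0 := by
      intro ε
      have : (fun i => ∑ k, sgn (ε k) * c i k) = fun _ => (0:ℝ) := by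
        funext i; simp [hc]
      rw [this, Finset.sup'_const]
    simp only [hG, Finset.sum_const, smul_zero, mul_zero]
    positivity
  · have key : ∀ t : ℝ, 0 < t →
        (1 / 2 ^ m) * ∑ ε : Fin m → Bool, univ.sup' hne (fun i => ∑ k, sgn (ε k) * c i k)
          ≤ Real.log l / t + t * B ^ 2 / 2 := fun t ht => massart_core m l hl hne c B hB t ht
    rcases eq_or_lt_of_le hlog0 with hLz | hLpos
    · have hR : B * Real.sqrt (2 * Real.log l) = 0 := by
        rw [← hLz]; simp
      rw [hR]
      refine le_of_forall_pos_le_add fun δ hδ => ?_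
      have ht : (0:ℝ) < 2 * δ / B ^ 2 := by positivity
      have := key _ ht
      rw [← hLz] at this
      calc (1 / 2 ^ m) * ∑ ε : Fin m → Bool, univ.sup' hne (fun i => ∑ k, sgn (ε k) * c i k)
          ≤ 0 / (2 * δ / B ^ 2) + (2 * δ / B ^ 2) * B ^ 2 / 2 := this
        _ = δ := by field_simp; ring
        _ = 0 + δ := by ring
    · set t : ℝ := Real.sqrt (2 * Real.log l) / B with htdef
      have ht : 0 < t := by
        apply div_pos _ hBpos
        exact Real.sqrt_pos.2 (by linarith)
      have hsq : Real.sqrt (2 * Real.log l) ^ 2 = 2 * Real.log l :=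
        Real.sq_sqrt (by linarith)
      have hsp : 0 < Real.sqrt (2 * Real.log l) := Real.sqrt_pos.2 (by linarith)
      have heq : Real.log l / t + t * B ^ 2 / 2 = B * Real.sqrt (2 * Real.log l) := by
        have h2 : Real.sqrt 2 * Real.sqrt 2 = 2 := Real.mul_self_sqrt (by norm_num)
        have hL : Real.sqrt (Real.log l) * Real.sqrt (Real.log l) = Real.log l :=
          Real.mul_self_sqrt hlog0
        have hss : Real.sqrt 2 * Real.sqrt (Real.log l) * (Real.sqrt 2 * Real.sqrt (Real.log l))
            = 2 * Real.log l := by nlinarith [h2, hL]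
        rw [htdef]
        field_simp
        nlinarith [hss, hsp, hBpos, Real.sq_sqrt (show (0:ℝ) ≤ Real.log l * 2 by linarith)]
      linarith [key t ht]

/-- Clustered sensitivity set: the Rademacher complexity of a union of `l`
translated and rotated p-ellipses is at most the complexity of the largest
centered ellipse plus `max_i ‖c_i‖_2 √(2 ln l) / m` for the centers. -/
theorem stmt13 (m l : ℕ) (hm : 0 < m) (hl : 0 < l) (p : ℝ) (hp : 1 ≤ p)
    (c : Fin l → Fin m → ℝ)
    (V : Fin l → Matrix (Fin m) (Fin m) ℝ)
    (hV : ∀ i, (V i)ᵀ * V i = 1 ∧ V i * (V i)ᵀ = 1)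
    (μ : Fin l → Fin m → ℝ) (hμ : ∀ i k, 0 < μ i k) :
    radComp m
        (⋃ i : Fin l,
          {x : Fin m → ℝ |
            ∑ k, |∑ j, V i j k * (x j - c i j)| ^ p / (μ i k) ^ p ≤ 1}) ≤
      (1 / m) *
          Finset.univ.sup' (Finset.univ_nonempty_iff.mpr (Fin.pos_iff_nonempty.mp hl))
            (fun i => pToOneNorm m p (V i * Matrix.diagonal (μ i))) +
        (Finset.univ.sup' (Finset.univ_nonempty_iff.mpr (Fin.pos_iff_nonempty.mp hl))
            (fun i => Real.sqrt (∑ j, (c i j) ^ 2))) *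
          Real.sqrt (2 * Real.log l) / m := by
  have hne : (univ : Finset (Fin l)).Nonempty :=
    Finset.univ_nonempty_iff.mpr (Fin.pos_iff_nonempty.mp hl)
  set S : Set (Fin m → ℝ) := ⋃ i : Fin l,
      {x : Fin m → ℝ | ∑ k, |∑ j, V i j k * (x j - c i j)| ^ p / (μ i k) ^ p ≤ 1} with hSdef
  set P : ℝ := univ.sup' hne (fun i => pToOneNorm m p (V i * Matrix.diagonal (μ i))) with hPdef
  set G : (Fin m → Bool) → ℝ :=
    fun ε => univ.sup' hne (fun i => ∑ k, sgn (ε k) * c i k) with hGdef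
  set B : ℝ := univ.sup' hne (fun i => Real.sqrt (∑ j, (c i j) ^ 2)) with hBdef
  have hp0 : p ≠ 0 := by linarith
  have hSne : S.Nonempty := by
    obtain ⟨i0, _⟩ := hne
    refine ⟨c i0, Set.mem_iUnion.2 ⟨i0, ?_⟩⟩
    simp [Real.zero_rpow hp0]
  have hsup : ∀ ε : Fin m → Bool,
      sSup ((fun a => ∑ k, sgn (ε k) * a k) '' S) ≤ P + G ε := by
    intro ε
    refine csSup_le (hSne.image _) ?_
    rintro y ⟨x, hx, rfl⟩
    rw [hSdef, Set.mem_iUnion] at hx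
    obtain ⟨i, hxi⟩ := hx
    have hxi' : ∑ k, |∑ j, V i j k * (x j - c i j)| ^ p / (μ i k) ^ p ≤ 1 := hxi
    obtain ⟨u, hu1, hu2⟩ := ellipse_param p (c i) x (V i) (hV i).2 (μ i) (hμ i) hxi'
    calc ∑ k, sgn (ε k) * x k
        = (∑ k, sgn (ε k) * (x k - c i k)) + ∑ k, sgn (ε k) * c i k := by
          rw [← Finset.sum_add_distrib]
          exact Finset.sum_congr rfl fun k _ => by ring
      _ ≤ (∑ k, |x k - c i k|) + ∑ k, sgn (ε k) * c i k :=
          add_le_add (Finset.sum_le_sum fun k _ => sgn_mul_le (ε k) _) le_rfl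
      _ = (∑ k, |(V i * Matrix.diagonal (μ i)).mulVec u k|) + ∑ k, sgn (ε k) * c i k := by
          congr 1
          exact Finset.sum_congr rfl fun k _ => by rw [hu2 k]
      _ ≤ pToOneNorm m p (V i * Matrix.diagonal (μ i)) + ∑ k, sgn (ε k) * c i k :=
          add_le_add (le_pToOne hp _ u hu1) le_rfl
      _ ≤ P + G ε := add_le_add
          (Finset.le_sup' (fun i => pToOneNorm m p (V i * Matrix.diagonal (μ i))) (mem_univ i))
          (Finset.le_sup' (fun i => ∑ k, sgn (ε k) * c i k) (mem_univ i))
  have key : (1 / 2 ^ m : ℝ) * ∑ ε : Fin m → Bool, sSup ((fun a => ∑ k, sgn (ε k) * a k) '' S)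
      ≤ P + B * Real.sqrt (2 * Real.log l) := by
    calc (1 / 2 ^ m : ℝ) * ∑ ε : Fin m → Bool, sSup ((fun a => ∑ k, sgn (ε k) * a k) '' S)
        ≤ (1 / 2 ^ m : ℝ) * ∑ ε : Fin m → Bool, (P + G ε) :=
          mul_le_mul_of_nonneg_left (Finset.sum_le_sum fun ε _ => hsup ε) (by positivity)
      _ = P + (1 / 2 ^ m : ℝ) * ∑ ε : Fin m → Bool, G ε := by
          rw [Finset.sum_add_distrib, Finset.sum_const, card_univ, Fintype.card_fun,
            Fintype.card_bool, Fintype.card_fin, nsmul_eq_mul, mul_add]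
          congr 1
          push_cast
          field_simp
      _ ≤ P + B * Real.sqrt (2 * Real.log l) :=
          add_le_add le_rfl (massart m l hl hne c)
  have hmpos : (0:ℝ) < m := by exact_mod_cast hm
  have main : radComp m S ≤ (1 / m) * P + B * Real.sqrt (2 * Real.log l) / m := by
    unfold radComp
    calc (1 / m : ℝ) * ((1 / 2 ^ m) * ∑ ε : Fin m → Bool,
          sSup ((fun a => ∑ k, sgn (ε k) * a k) '' S))
        ≤ (1 / m : ℝ) * (P + B * Real.sqrt (2 * Real.log l)) :=
          mul_le_mul_of_nonneg_left key (by positivity)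
      _ = (1 / m) * P + B * Real.sqrt (2 * Real.log l) / m := by ring
  exact main
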